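/- Unconstrained feasibility: the targets $(\bar{q}_1,\dots,\bar{q}_K)$ with $\bar{q}_k > 0$ are simultaneously achievable with equality by some $\mathbf{p} > 0$ (i.e., there exists $\mathbf{p}$ with $q_k(\mathbf{p}) = \bar{q}_k$ for all $k$, where $q_k(\mathbf{p}) = P_t\frac{p_k\beta_k^2(M_t-1)}{\sum_l p_l\beta_l + N_0/\tau}$) if and only if $\sum_{k=1}^K \frac{\bar{q}_k}{P_t(M_t-1)\beta_k} < 1$. -/

import Mathlib

open Finset

/-- Unconstrained feasibility: the targets `q̄_k > 0` are simultaneously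
achievable with equality by some positive beacon power vector iff
`∑_k q̄_k / (Pt (Mt - 1) β_k) < 1`. -/
theorem unconstrained_feasibility_iff {K : ℕ} (Pt N0 τ : ℝ) (Mt : ℕ)
    (β qbar : Fin K → ℝ)
    (hPt : 0 < Pt) (hN0 : 0 < N0) (hτ : 0 < τ) (hMt : 2 ≤ Mt)
    (hβ : ∀ l, 0 < β l) (hqbar : ∀ k, 0 < qbar k) :
    (∃ p : Fin K → ℝ, (∀ k, 0 < p k) ∧ ∀ k,
        Pt * (p k * (β k) ^ 2 * ((Mt : ℝ) - 1)) / (∑ l, p l * β l + N0 / τ) = qbar k)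
      ↔ ∑ k, qbar k / (Pt * ((Mt : ℝ) - 1) * β k) < 1 := by
  have hM1 : (0:ℝ) < (Mt:ℝ) - 1 := by
    have : (2:ℝ) ≤ (Mt:ℝ) := by exact_mod_cast hMt
    linarith
  constructor
  · rintro ⟨p, hp, heq⟩
    set S := ∑ l, p l * β l with hS
    have hSpos : 0 ≤ S := Finset.sum_nonneg fun l _ => le_of_lt (mul_pos (hp l) (hβ l))
    have hN : 0 < N0 / τ := div_pos hN0 hτ
    have hD : 0 < S + N0 / τ := by linarith
    have key : ∀ k, qbar k / (Pt * ((Mt:ℝ)-1) * β k) = p k * β k / (S + N0/τ) := by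
      intro k
      have h3 := (hβ k).ne'
      rw [← heq k]
      field_simp
    rw [Finset.sum_congr rfl (fun k _ => key k), ← Finset.sum_div, ← hS,
      div_lt_one hD]
    linarith
  · intro hA
    set A := ∑ k, qbar k / (Pt * ((Mt:ℝ)-1) * β k) with hAdef
    have hA0 : 0 ≤ A :=
      Finset.sum_nonneg fun k _ => le_of_lt (div_pos (hqbar k) (mul_pos (mul_pos hPt hM1) (hβ k)))
    have h1A : 0 < 1 - A := by linarith
    refine ⟨fun k => qbar k / (Pt * ((Mt:ℝ)-1) * (β k)^2) * ((N0/τ)/(1-A)),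
      fun k => mul_pos (div_pos (hqbar k) (mul_pos (mul_pos hPt hM1) (pow_pos (hβ k) 2))) (div_pos (div_pos hN0 hτ) h1A),
      fun k => ?_⟩
    have hSum : ∑ l, (qbar l / (Pt * ((Mt:ℝ)-1) * (β l)^2) * ((N0/τ)/(1-A))) * β l
        = A * ((N0/τ)/(1-A)) := by
      rw [hAdef, Finset.sum_mul]
      refine Finset.sum_congr rfl fun l _ => ?_
      have hbl := (hβ l).ne'
      field_simp
    rw [hSum]
    have hD : A * ((N0/τ)/(1-A)) + N0/τ = (N0/τ)/(1-A) := by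
      field_simp
      ring
    rw [hD]
    have hbk := (hβ k).ne'
    field_simp
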